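/- Let 𝒦 be a convex geometry of stem size 2 on a finite set E with rooted circuits 𝒞, and let x, y, z, u, v ∈ E be pairwise distinct. If ({x,y}, z) ∈ 𝒞 and ({v,z}, u) ∈ 𝒞, then ({x,v}, u) ∈ 𝒞, ({y,v}, u) ∈ 𝒞, or ({x,y}, u) ∈ 𝒞. -/

import Mathlib

open Set

variable {α : Type*}

/-- A closure system on a ground set `E`: a family of subsets of `E` containing `E`
and closed under pairwise intersection. -/
def IsClosureSystem (E : Set α) (K : Set (Set α)) : Prop :=
  (∀ A ∈ K, A ⊆ E) ∧ E ∈ K ∧ ∀ A ∈ K, ∀ B ∈ K, A ∩ B ∈ K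

/-- The closure operator `τ(X) = ⋂ {A ∈ K : X ⊆ A}`. -/
def closureOp (K : Set (Set α)) (X : Set α) : Set α :=
  ⋂₀ {A | A ∈ K ∧ X ⊆ A}

/-- The extreme operator `ex(X) = {x ∈ X : x ∉ τ(X \ {x})}`. -/
def extremeOp (K : Set (Set α)) (X : Set α) : Set α :=
  {x | x ∈ X ∧ x ∉ closureOp K (X \ {x})}

/-- A rooted circuit `(X, e)` of a closure system `K` on ground set `E`:
`e ∉ X` and `X` is minimal under inclusion with `e ∈ τ(X)`. -/
def IsRootedCircuit (E : Set α) (K : Set (Set α)) (X : Set α) (e : α) : Prop :=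
  X ⊆ E ∧ e ∈ E ∧ e ∉ X ∧ e ∈ closureOp K X ∧
    ∀ Y ⊆ X, e ∈ closureOp K Y → Y = X

/-- A convex geometry: a closure system in which every nonempty closed set has a
nonempty extreme set. -/
def IsConvexGeometry (E : Set α) (K : Set (Set α)) : Prop :=
  IsClosureSystem E K ∧ ∀ X ∈ K, X.Nonempty → (extremeOp K X).Nonempty

/-- A convex geometry has stem size 2 if every rooted circuit has stem of size 2. -/
def StemSize2 (E : Set α) (K : Set (Set α)) : Prop :=
  ∀ X e, IsRootedCircuit E K X e → X.ncard = 2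

theorem stmt3 (E : Set α) (hE : E.Finite) (K : Set (Set α))
    (hK : IsConvexGeometry E K) (h2 : StemSize2 E K)
    (x y z u v : α) (hx : x ∈ E) (hy : y ∈ E) (hz : z ∈ E) (hu : u ∈ E) (hv : v ∈ E)
    (hxy : x ≠ y) (hxz : x ≠ z) (hxu : x ≠ u) (hxv : x ≠ v)
    (hyz : y ≠ z) (hyu : y ≠ u) (hyv : y ≠ v)
    (hzu : z ≠ u) (hzv : z ≠ v) (huv : u ≠ v)
    (h1 : IsRootedCircuit E K {x, y} z) (h2' : IsRootedCircuit E K {v, z} u) :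
    IsRootedCircuit E K {x, v} u ∨ IsRootedCircuit E K {y, v} u ∨
      IsRootedCircuit E K {x, y} u := by
  classical
  obtain ⟨-, -, -, hzC, -⟩ := h1
  obtain ⟨-, -, -, huC, -⟩ := h2'
  set S : Set α := {x, y, v} with hS
  -- u ∈ τ(S)
  have huS : u ∈ closureOp K S := by
    intro A hA
    obtain ⟨hAK, hSA⟩ := hA
    have hzA : z ∈ A := hzC A ⟨hAK, by
      intro w hw
      rcases hw with rfl | rfl
      · exact hSA (by simp [hS])
      · exact hSA (by simp [hS])⟩
    exact huC A ⟨hAK, by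
      intro w hw
      rcases hw with rfl | rfl
      · exact hSA (by simp [hS])
      · exact hzA⟩
  -- pick a minimal Y ⊆ S with u ∈ τ(Y)
  set T : Set (Set α) := {Y | Y ⊆ S ∧ u ∈ closureOp K Y} with hT
  have hTfin : T.Finite := by
    have hSfin : S.Finite := by
      exact ((Set.finite_singleton v).insert y).insert x
    exact (Set.Finite.finite_subsets hSfin).subset (fun Y hY => hY.1)
  have hTne : T.Nonempty := ⟨S, le_refl S, huS⟩
  obtain ⟨Y, hYT, hYmin⟩ := Set.Finite.exists_minimalFor id T hTfin hTne
  have hYS : Y ⊆ S := hYT.1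
  have huY : u ∈ closureOp K Y := hYT.2
  have huNotS : u ∉ S := by
    simp only [hS, Set.mem_insert_iff, Set.mem_singleton_iff]
    push_neg
    exact ⟨hxu.symm, hyu.symm, huv⟩
  have hcirc : IsRootedCircuit E K Y u := by
    refine ⟨fun w hw => ?_, hu, fun h => huNotS (hYS h), huY, ?_⟩
    · rcases hYS hw with rfl | rfl | rfl <;> assumption
    · intro Y' hY' huY'
      exact le_antisymm hY' (hYmin (j := Y') ⟨hY'.trans hYS, huY'⟩ hY')
  have hcard : Y.ncard = 2 := h2 Y u hcirc
  have hYfin : Y.Finite := (hE.subset (fun w hw => hcirc.1 hw))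
  -- Y is one of the three 2-element subsets of {x, y, v}
  by_cases hvY : v ∈ Y
  · by_cases hxY : x ∈ Y
    · left
      have : Y = {x, v} := by
        apply (Set.eq_of_subset_of_ncard_le (by
          intro w hw; rcases hw with rfl | rfl <;> assumption) ?_ hYfin).symm
        rw [hcard, Set.ncard_pair hxv]
      rwa [this] at hcirc
    · right; left
      have hsub : Y ⊆ {y, v} := by
        intro w hw
        rcases hYS hw with rfl | rfl | rfl
        · exact absurd hw hxY
        · exact Or.inl rfl
        · exact Or.inr rfl
      have : Y = {y, v} := by
        apply Set.eq_of_subset_of_ncard_le hsub ?_ ((Set.finite_singleton v).insert y)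
        rw [hcard, Set.ncard_pair hyv]
      rwa [this] at hcirc
  · right; right
    have hsub : Y ⊆ {x, y} := by
      intro w hw
      rcases hYS hw with rfl | rfl | rfl
      · exact Or.inl rfl
      · exact Or.inr rfl
      · exact absurd hw hvY
    have : Y = {x, y} := by
      apply Set.eq_of_subset_of_ncard_le hsub ?_ ((Set.finite_singleton y).insert x)
      rw [hcard, Set.ncard_pair hxy]
    rwa [this] at hcirc
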